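/- Suppose C : [0,1]^3 → ℝ is such that its partial derivative C_v(u_1, u_2 | v) = ∂C(u_1,u_2,v)/∂v exists and is Lipschitz continuous on [0,1]^3 with Lipschitz constant L (with respect to the sup metric on [0,1]^3). Define the Bernstein smoother B(C; u_1,u_2,v) = ∑_{h_1=0}^{l_1} ∑_{h_2=0}^{l_2} ∑_{k=0}^{m} C(h_1/l_1, h_2/l_2, k/m) P_{l_1,h_1}(u_1) P_{l_2,h_2}(u_2) P_{m,k}(v) and C^{(1)}(u_1,u_2|v) = ∂B(C;u_1,u_2,v)/∂v. Then for every v ∈ [0,1], sup_{(u_1,u_2) ∈ [0,1]^2} |C^{(1)}(u_1,u_2|v) − C_v(u_1,u_2|v)| ≤ L/m + L(1/(2√l_1) + 1/(2√l_2) + 1/(2√(m−1))). -/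

import Mathlib

/-- Bernstein basis polynomial `P_{m,k}(v) = C(m,k) v^k (1-v)^{m-k}`. -/
noncomputable def bern (m k : ℕ) (v : ℝ) : ℝ := (m.choose k : ℝ) * v ^ k * (1 - v) ^ (m - k)

/-- The trivariate Bernstein smoother of `C` with degrees `l₁, l₂, m`. -/
noncomputable def bernSmooth (C : ℝ → ℝ → ℝ → ℝ) (l₁ l₂ m : ℕ) (u₁ u₂ v : ℝ) : ℝ :=
  ∑ h₁ ∈ Finset.range (l₁ + 1), ∑ h₂ ∈ Finset.range (l₂ + 1), ∑ k ∈ Finset.range (m + 1),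
    C (h₁ / l₁) (h₂ / l₂) (k / m) * bern l₁ h₁ u₁ * bern l₂ h₂ u₂ * bern m k v

open Finset

lemma bern_eval (m k : ℕ) (v : ℝ) : (bernsteinPolynomial ℝ m k).eval v = bern m k v := by
  simp [bernsteinPolynomial, bern]

lemma bern_nonneg {m k : ℕ} {v : ℝ} (h0 : 0 ≤ v) (h1 : v ≤ 1) : 0 ≤ bern m k v := by
  have : (0:ℝ) ≤ 1 - v := by linarith
  unfold bern; positivity

lemma bern_sum (n : ℕ) (v : ℝ) : ∑ k ∈ range (n + 1), bern n k v = 1 := by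
  have h := congrArg (Polynomial.eval v) (bernsteinPolynomial.sum ℝ n)
  simpa [Polynomial.eval_finset_sum, bern_eval] using h

lemma bern_variance (n : ℕ) (hn : 1 ≤ n) (v : ℝ) :
    ∑ k ∈ range (n + 1), (v - (k:ℝ)/n) ^ 2 * bern n k v = v * (1 - v) / n := by
  have h0 : (n:ℝ) ≠ 0 := Nat.cast_ne_zero.2 (by omega)
  have h := congrArg (Polynomial.eval v) (bernsteinPolynomial.variance ℝ n)
  simp only [Polynomial.eval_finset_sum, Polynomial.eval_mul, Polynomial.eval_pow,
    Polynomial.eval_sub, Polynomial.eval_natCast, nsmul_eq_mul, Polynomial.eval_X,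
    Polynomial.eval_one, bern_eval] at h
  have : ∑ k ∈ range (n + 1), (v - (k:ℝ)/n) ^ 2 * bern n k v
      = (∑ k ∈ range (n + 1), ((n:ℝ) * v - (k:ℝ)) ^ 2 * bern n k v) / n ^ 2 := by
    rw [Finset.sum_div]
    refine Finset.sum_congr rfl fun k _ => ?_
    have e : (v - (k:ℝ)/n) = ((n:ℝ)*v - k)/n := by field_simp
    rw [e, div_pow, div_mul_eq_mul_div]
  rw [this, h]
  field_simp

lemma bern_absdev (n : ℕ) (hn : 1 ≤ n) {v : ℝ} (h0 : 0 ≤ v) (h1 : v ≤ 1) :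
    ∑ k ∈ range (n + 1), |(k:ℝ)/n - v| * bern n k v ≤ 1 / (2 * Real.sqrt n) := by
  have hnpos : (0:ℝ) < n := by exact_mod_cast Nat.pos_of_ne_zero (by omega)
  set S := ∑ k ∈ range (n + 1), |(k:ℝ)/n - v| * bern n k v with hS
  have hSnn : 0 ≤ S := Finset.sum_nonneg fun k _ =>
    mul_nonneg (abs_nonneg _) (bern_nonneg h0 h1)
  have cs := Finset.sum_mul_sq_le_sq_mul_sq (range (n + 1))
    (fun k => |(k:ℝ)/n - v| * Real.sqrt (bern n k v)) (fun k => Real.sqrt (bern n k v))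
  have e1 : ∑ k ∈ range (n + 1),
      (|(k:ℝ)/n - v| * Real.sqrt (bern n k v)) * Real.sqrt (bern n k v) = S := by
    refine Finset.sum_congr rfl fun k _ => ?_
    rw [mul_assoc, Real.mul_self_sqrt (bern_nonneg h0 h1)]
  have e2 : ∑ k ∈ range (n + 1), (|(k:ℝ)/n - v| * Real.sqrt (bern n k v)) ^ 2
      = v * (1 - v) / n := by
    rw [← bern_variance n hn v]
    refine Finset.sum_congr rfl fun k _ => ?_
    rw [mul_pow, Real.sq_sqrt (bern_nonneg h0 h1), sq_abs]
    ring
  have e3 : ∑ k ∈ range (n + 1), (Real.sqrt (bern n k v)) ^ 2 = 1 := by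
    rw [← bern_sum n v]
    exact Finset.sum_congr rfl fun k _ => Real.sq_sqrt (bern_nonneg h0 h1)
  rw [e1, e2, e3, mul_one] at cs
  have hvar : v * (1 - v) / n ≤ 1 / (4 * n) := by
    rw [div_le_div_iff₀ hnpos (by linarith)]
    nlinarith [sq_nonneg (v - 1/2)]
  have hS2 : S ^ 2 ≤ 1 / (4 * n) := le_trans cs hvar
  have : S ≤ Real.sqrt (1 / (4 * n)) := by
    have := Real.sqrt_le_sqrt hS2
    rwa [Real.sqrt_sq hSnn] at this
  refine le_trans this (le_of_eq ?_)
  rw [one_div, Real.sqrt_inv, one_div]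
  congr 1
  rw [show (4:ℝ) * n = 2 ^ 2 * n by ring, Real.sqrt_mul (by positivity),
    Real.sqrt_sq (by norm_num)]

lemma bern_hasDerivAt (m k : ℕ) (v : ℝ) :
    HasDerivAt (fun t => bern m k t)
      ((m:ℝ) * ((if k = 0 then 0 else bern (m-1) (k-1) v) - bern (m-1) k v)) v := by
  have h := Polynomial.hasDerivAt (bernsteinPolynomial ℝ m k) v
  simp only [bern_eval] at h
  cases k with
  | zero =>
      rw [bernsteinPolynomial.derivative_zero] at h
      simp only [Polynomial.eval_mul, Polynomial.eval_neg, Polynomial.eval_natCast,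
        bern_eval] at h
      simpa [mul_sub] using h
  | succ k =>
      rw [bernsteinPolynomial.derivative_succ] at h
      simp only [Polynomial.eval_mul, Polynomial.eval_sub, Polynomial.eval_natCast,
        bern_eval] at h
      simpa using h

lemma sum_abel (n : ℕ) (a D : ℕ → ℝ) :
    ∑ k ∈ range (n + 1), a k * ((if k = 0 then 0 else D (k - 1)) - D k)
      = ∑ k ∈ range n, (a (k + 1) - a k) * D k - a n * D n := by
  induction n with
  | zero => simp
  | succ n ih =>
      rw [Finset.sum_range_succ, ih, Finset.sum_range_succ]
      simp only [Nat.succ_ne_zero, if_false, Nat.add_sub_cancel]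
      ring

lemma bern_top_zero (m : ℕ) (hm : 1 ≤ m) (v : ℝ) : bern (m - 1) m v = 0 := by
  unfold bern
  rw [Nat.choose_eq_zero_of_lt (by omega)]
  simp

lemma hasDerivAt_weighted (m : ℕ) (hm : 1 ≤ m) (a : ℕ → ℝ) (v : ℝ) :
    HasDerivAt (fun t => ∑ k ∈ range (m + 1), a k * bern m k t)
      ((m:ℝ) * ∑ k ∈ range m, (a (k + 1) - a k) * bern (m - 1) k v) v := by
  have h : HasDerivAt (fun t => ∑ k ∈ range (m + 1), a k * bern m k t)
      (∑ k ∈ range (m + 1),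
        a k * ((m:ℝ) * ((if k = 0 then 0 else bern (m-1) (k-1) v) - bern (m-1) k v))) v :=
    HasDerivAt.fun_sum fun k _ => (bern_hasDerivAt m k v).const_mul (a k)
  convert h using 1
  have e : ∑ k ∈ range (m + 1),
      a k * ((m:ℝ) * ((if k = 0 then 0 else bern (m-1) (k-1) v) - bern (m-1) k v))
      = (m:ℝ) * ∑ k ∈ range (m + 1),
        a k * ((if k = 0 then 0 else bern (m-1) (k-1) v) - bern (m-1) k v) := by
    rw [Finset.mul_sum]; exact Finset.sum_congr rfl fun k _ => by ring
  rw [e, sum_abel m a (fun k => bern (m-1) k v), bern_top_zero m hm v, mul_zero, sub_zero]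

lemma sum3_factor (s t u : Finset ℕ) (f g p : ℕ → ℝ) :
    ∑ i ∈ s, ∑ j ∈ t, ∑ k ∈ u, f i * g j * p k
      = (∑ i ∈ s, f i) * (∑ j ∈ t, g j) * (∑ k ∈ u, p k) := by
  rw [Finset.sum_mul_sum, Finset.sum_mul]
  refine Finset.sum_congr rfl fun i _ => ?_
  rw [Finset.sum_mul]
  refine Finset.sum_congr rfl fun j _ => ?_
  rw [Finset.mul_sum]


/-- If the partial derivative `C_v = ∂C/∂v` exists on `[0,1]³` and is Lipschitz with constant
`L` for the sup metric on `[0,1]³`, then the `v`-derivative of the Bernstein smoother satisfies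
`sup_{(u₁,u₂)∈[0,1]²} |C⁽¹⁾(u₁,u₂|v) − C_v(u₁,u₂|v)| ≤ L/m + L(1/(2√l₁)+1/(2√l₂)+1/(2√(m−1)))`
for every `v ∈ [0,1]`. -/
theorem bernstein_smoother_deriv_approx
    (C Cv : ℝ → ℝ → ℝ → ℝ) (L : ℝ) (l₁ l₂ m : ℕ) (hl₁ : 1 ≤ l₁) (hl₂ : 1 ≤ l₂) (hm : 2 ≤ m)
    (hderiv : ∀ u₁ ∈ Set.Icc (0:ℝ) 1, ∀ u₂ ∈ Set.Icc (0:ℝ) 1, ∀ v ∈ Set.Icc (0:ℝ) 1,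
      HasDerivAt (fun t => C u₁ u₂ t) (Cv u₁ u₂ v) v)
    (hLip : ∀ u₁ ∈ Set.Icc (0:ℝ) 1, ∀ u₂ ∈ Set.Icc (0:ℝ) 1, ∀ v ∈ Set.Icc (0:ℝ) 1,
      ∀ u₁' ∈ Set.Icc (0:ℝ) 1, ∀ u₂' ∈ Set.Icc (0:ℝ) 1, ∀ v' ∈ Set.Icc (0:ℝ) 1,
      |Cv u₁ u₂ v - Cv u₁' u₂' v'| ≤ L * max |u₁ - u₁'| (max |u₂ - u₂'| |v - v'|)) :
    ∀ v ∈ Set.Icc (0:ℝ) 1, ∀ u₁ ∈ Set.Icc (0:ℝ) 1, ∀ u₂ ∈ Set.Icc (0:ℝ) 1,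
      |deriv (fun t => bernSmooth C l₁ l₂ m u₁ u₂ t) v - Cv u₁ u₂ v| ≤
        L / m + L * (1 / (2 * Real.sqrt l₁) + 1 / (2 * Real.sqrt l₂)
          + 1 / (2 * Real.sqrt ((m:ℝ) - 1))) := by
  intro v hv u₁ hu₁ u₂ hu₂
  obtain ⟨hv0, hv1⟩ := hv
  obtain ⟨hu₁0, hu₁1⟩ := hu₁
  obtain ⟨hu₂0, hu₂1⟩ := hu₂
  have hmpos : (0:ℝ) < m := by exact_mod_cast Nat.pos_of_ne_zero (by omega)
  have hm1 : (2:ℝ) ≤ m := by exact_mod_cast hm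
  have hl₁pos : (0:ℝ) < l₁ := by exact_mod_cast Nat.pos_of_ne_zero (by omega)
  have hl₂pos : (0:ℝ) < l₂ := by exact_mod_cast Nat.pos_of_ne_zero (by omega)
  -- nonnegativity of L
  have hL0 : 0 ≤ L := by
    have h := hLip 0 (by norm_num) 0 (by norm_num) 0 (by norm_num) 1 (by norm_num)
      0 (by norm_num) 0 (by norm_num)
    simp only [sub_self, abs_zero, zero_sub, abs_neg, abs_one, max_self] at h
    have h2 : max (1:ℝ) 0 = 1 := by norm_num
    rw [h2, mul_one] at h
    exact le_trans (abs_nonneg _) h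
  -- grid points lie in [0,1]
  have hgrid : ∀ (h n : ℕ), h ≤ n → 0 < (n:ℝ) → ((h:ℝ)/n) ∈ Set.Icc (0:ℝ) 1 := by
    intro h n hh hn
    constructor
    · positivity
    · rw [div_le_one hn]; exact_mod_cast hh
  -- Mean value theorem on each subinterval
  have mvt : ∀ h₁ h₂ k : ℕ, h₁ ≤ l₁ → h₂ ≤ l₂ → k < m →
      ∃ ξ, ξ ∈ Set.Ioo ((k:ℝ)/m) (((k:ℝ)+1)/m) ∧
        Cv ((h₁:ℝ)/l₁) ((h₂:ℝ)/l₂) ξ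
          = (C ((h₁:ℝ)/l₁) ((h₂:ℝ)/l₂) (((k:ℝ)+1)/m)
            - C ((h₁:ℝ)/l₁) ((h₂:ℝ)/l₂) ((k:ℝ)/m)) * m := by
    intro h₁ h₂ k hh₁ hh₂ hk
    have hab : (k:ℝ)/m < ((k:ℝ)+1)/m := by
      apply div_lt_div_of_pos_right ?_ hmpos
      linarith
    have hsub : Set.Icc ((k:ℝ)/m) (((k:ℝ)+1)/m) ⊆ Set.Icc (0:ℝ) 1 := by
      apply Set.Icc_subset_Icc
      · positivity
      · rw [div_le_one hmpos]
        have : (k:ℝ) + 1 ≤ m := by exact_mod_cast hk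
        linarith
    have hu1m := hgrid h₁ l₁ hh₁ hl₁pos
    have hu2m := hgrid h₂ l₂ hh₂ hl₂pos
    obtain ⟨c, hc, hceq⟩ := exists_hasDerivAt_eq_slope
      (fun t => C ((h₁:ℝ)/l₁) ((h₂:ℝ)/l₂) t) (fun t => Cv ((h₁:ℝ)/l₁) ((h₂:ℝ)/l₂) t) hab
      (fun x hx => (hderiv _ hu1m _ hu2m x (hsub hx)).continuousAt.continuousWithinAt)
      (fun x hx => hderiv _ hu1m _ hu2m x (hsub (Set.Ioo_subset_Icc_self hx)))
    refine ⟨c, hc, ?_⟩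
    rw [hceq, show ((k:ℝ)+1)/m - (k:ℝ)/m = 1/m by field_simp; ring, one_div, div_inv_eq_mul]
  choose! ξ hξmem hξeq using mvt
  -- derivative of the Bernstein smoother
  have hDer : deriv (fun t => bernSmooth C l₁ l₂ m u₁ u₂ t) v
      = ∑ h₁ ∈ Finset.range (l₁+1), ∑ h₂ ∈ Finset.range (l₂+1), (m:ℝ) *
          ∑ k ∈ Finset.range m,
            ((C ((h₁:ℝ)/l₁) ((h₂:ℝ)/l₂) (((k+1:ℕ):ℝ)/m) * bern l₁ h₁ u₁ * bern l₂ h₂ u₂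
              - C ((h₁:ℝ)/l₁) ((h₂:ℝ)/l₂) ((k:ℝ)/m) * bern l₁ h₁ u₁ * bern l₂ h₂ u₂)
              * bern (m-1) k v) := by
    refine HasDerivAt.deriv ?_
    unfold bernSmooth
    exact HasDerivAt.fun_sum fun h₁ _ => HasDerivAt.fun_sum fun h₂ _ =>
      hasDerivAt_weighted m (by omega) _ v
  have hDval : (∑ h₁ ∈ Finset.range (l₁+1), ∑ h₂ ∈ Finset.range (l₂+1), (m:ℝ) *
          ∑ k ∈ Finset.range m,
            ((C ((h₁:ℝ)/l₁) ((h₂:ℝ)/l₂) (((k+1:ℕ):ℝ)/m) * bern l₁ h₁ u₁ * bern l₂ h₂ u₂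
              - C ((h₁:ℝ)/l₁) ((h₂:ℝ)/l₂) ((k:ℝ)/m) * bern l₁ h₁ u₁ * bern l₂ h₂ u₂)
              * bern (m-1) k v))
      = ∑ h₁ ∈ Finset.range (l₁+1), ∑ h₂ ∈ Finset.range (l₂+1), ∑ k ∈ Finset.range m,
          Cv ((h₁:ℝ)/l₁) ((h₂:ℝ)/l₂) (ξ h₁ h₂ k)
            * (bern l₁ h₁ u₁ * bern l₂ h₂ u₂ * bern (m-1) k v) := by
    refine Finset.sum_congr rfl fun h₁ hh₁ => Finset.sum_congr rfl fun h₂ hh₂ => ?_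
    rw [Finset.mul_sum]
    refine Finset.sum_congr rfl fun k hk => ?_
    rw [hξeq h₁ h₂ k (Nat.lt_succ_iff.mp (Finset.mem_range.mp hh₁))
      (Nat.lt_succ_iff.mp (Finset.mem_range.mp hh₂)) (Finset.mem_range.mp hk)]
    push_cast
    ring
  have hb1 : ∑ h₁ ∈ Finset.range (l₁+1), bern l₁ h₁ u₁ = 1 := bern_sum l₁ u₁
  have hb2 : ∑ h₂ ∈ Finset.range (l₂+1), bern l₂ h₂ u₂ = 1 := bern_sum l₂ u₂
  have hb3 : ∑ k ∈ Finset.range m, bern (m-1) k v = 1 := by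
    have h := bern_sum (m-1) v
    rwa [Nat.sub_add_cancel (by omega)] at h
  have hCvrep : Cv u₁ u₂ v
      = ∑ h₁ ∈ Finset.range (l₁+1), ∑ h₂ ∈ Finset.range (l₂+1), ∑ k ∈ Finset.range m,
          (Cv u₁ u₂ v * bern l₁ h₁ u₁) * bern l₂ h₂ u₂ * bern (m-1) k v := by
    rw [sum3_factor, ← Finset.mul_sum, hb1, hb2, hb3, mul_one, mul_one, mul_one]
  have hdiff : deriv (fun t => bernSmooth C l₁ l₂ m u₁ u₂ t) v - Cv u₁ u₂ v
      = ∑ h₁ ∈ Finset.range (l₁+1), ∑ h₂ ∈ Finset.range (l₂+1), ∑ k ∈ Finset.range m,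
          (Cv ((h₁:ℝ)/l₁) ((h₂:ℝ)/l₂) (ξ h₁ h₂ k) - Cv u₁ u₂ v)
            * (bern l₁ h₁ u₁ * bern l₂ h₂ u₂ * bern (m-1) k v) := by
    rw [hDer, hDval]
    conv_lhs => rw [hCvrep]
    rw [← Finset.sum_sub_distrib]
    refine Finset.sum_congr rfl fun h₁ _ => ?_
    rw [← Finset.sum_sub_distrib]
    refine Finset.sum_congr rfl fun h₂ _ => ?_
    rw [← Finset.sum_sub_distrib]
    refine Finset.sum_congr rfl fun k _ => ?_
    ring
  have hw : ∀ h₁ h₂ k : ℕ, 0 ≤ bern l₁ h₁ u₁ * bern l₂ h₂ u₂ * bern (m-1) k v :=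
    fun h₁ h₂ k => mul_nonneg (mul_nonneg (bern_nonneg hu₁0 hu₁1) (bern_nonneg hu₂0 hu₂1))
      (bern_nonneg hv0 hv1)
  -- pointwise Lipschitz bound
  have hpt : ∀ h₁ ∈ Finset.range (l₁+1), ∀ h₂ ∈ Finset.range (l₂+1), ∀ k ∈ Finset.range m,
      |Cv ((h₁:ℝ)/l₁) ((h₂:ℝ)/l₂) (ξ h₁ h₂ k) - Cv u₁ u₂ v|
        ≤ L * (|u₁ - (h₁:ℝ)/l₁| + |u₂ - (h₂:ℝ)/l₂|
            + (1/(m:ℝ) + |(k:ℝ)/((m:ℝ)-1) - v|)) := by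
    intro h₁ hh₁ h₂ hh₂ k hk
    have hh₁' := Nat.lt_succ_iff.mp (Finset.mem_range.mp hh₁)
    have hh₂' := Nat.lt_succ_iff.mp (Finset.mem_range.mp hh₂)
    have hk' := Finset.mem_range.mp hk
    have hk1 : (k:ℝ) + 1 ≤ m := by exact_mod_cast hk'
    have hξIoo := hξmem h₁ h₂ k hh₁' hh₂' hk'
    have hξIcc : ξ h₁ h₂ k ∈ Set.Icc (0:ℝ) 1 := by
      constructor
      · have : (0:ℝ) ≤ (k:ℝ)/m := by positivity
        linarith [hξIoo.1]
      · have : ((k:ℝ)+1)/m ≤ 1 := by rw [div_le_one hmpos]; linarith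
        linarith [hξIoo.2]
    have hlip := hLip u₁ ⟨hu₁0, hu₁1⟩ u₂ ⟨hu₂0, hu₂1⟩ v ⟨hv0, hv1⟩
      ((h₁:ℝ)/l₁) (hgrid h₁ l₁ hh₁' hl₁pos) ((h₂:ℝ)/l₂) (hgrid h₂ l₂ hh₂' hl₂pos)
      (ξ h₁ h₂ k) hξIcc
    rw [abs_sub_comm]
    refine hlip.trans (mul_le_mul_of_nonneg_left ?_ hL0)
    have hvξ : |v - ξ h₁ h₂ k| ≤ 1/(m:ℝ) + |(k:ℝ)/((m:ℝ)-1) - v| := by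
      have hm1' : (0:ℝ) < (m:ℝ) - 1 := by linarith
      have hkm1 : (k:ℝ) ≤ (m:ℝ) - 1 := by linarith
      have hA : (k:ℝ)/((m:ℝ)-1) - (k:ℝ)/m ≤ 1/m := by
        rw [div_sub_div _ _ (ne_of_gt hm1') (ne_of_gt hmpos),
          div_le_div_iff₀ (by positivity) hmpos]
        nlinarith
      have hB : ((k:ℝ)+1)/m - (k:ℝ)/((m:ℝ)-1) ≤ 1/m := by
        rw [div_sub_div _ _ (ne_of_gt hmpos) (ne_of_gt hm1'),
          div_le_div_iff₀ (by positivity) hmpos]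
        nlinarith
      have h1 : |(k:ℝ)/((m:ℝ)-1) - ξ h₁ h₂ k| ≤ 1/m := by
        rw [abs_le]
        constructor
        · have := hξIoo.2; linarith
        · have := hξIoo.1; linarith
      calc |v - ξ h₁ h₂ k| ≤ |v - (k:ℝ)/((m:ℝ)-1)| + |(k:ℝ)/((m:ℝ)-1) - ξ h₁ h₂ k| :=
            abs_sub_le _ _ _
        _ ≤ 1/(m:ℝ) + |(k:ℝ)/((m:ℝ)-1) - v| := by
            rw [abs_sub_comm v]
            linarith
    have hA1 := abs_nonneg (u₁ - (h₁:ℝ)/l₁)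
    have hA2 := abs_nonneg (u₂ - (h₂:ℝ)/l₂)
    have hA3 := abs_nonneg ((k:ℝ)/((m:ℝ)-1) - v)
    have hA4 := abs_nonneg (v - ξ h₁ h₂ k)
    have hminv : (0:ℝ) ≤ 1/(m:ℝ) := by positivity
    apply max_le
    · linarith
    · apply max_le
      · linarith
      · linarith
  -- assemble
  rw [hdiff]
  have step1 : |∑ h₁ ∈ Finset.range (l₁+1), ∑ h₂ ∈ Finset.range (l₂+1),
        ∑ k ∈ Finset.range m,
          (Cv ((h₁:ℝ)/l₁) ((h₂:ℝ)/l₂) (ξ h₁ h₂ k) - Cv u₁ u₂ v)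
            * (bern l₁ h₁ u₁ * bern l₂ h₂ u₂ * bern (m-1) k v)|
      ≤ ∑ h₁ ∈ Finset.range (l₁+1), ∑ h₂ ∈ Finset.range (l₂+1), ∑ k ∈ Finset.range m,
          (L * (|u₁ - (h₁:ℝ)/l₁| + |u₂ - (h₂:ℝ)/l₂|
            + (1/(m:ℝ) + |(k:ℝ)/((m:ℝ)-1) - v|)))
            * (bern l₁ h₁ u₁ * bern l₂ h₂ u₂ * bern (m-1) k v) := by
    refine (Finset.abs_sum_le_sum_abs _ _).trans
      (Finset.sum_le_sum fun h₁ hh₁ => ?_)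
    refine (Finset.abs_sum_le_sum_abs _ _).trans
      (Finset.sum_le_sum fun h₂ hh₂ => ?_)
    refine (Finset.abs_sum_le_sum_abs _ _).trans
      (Finset.sum_le_sum fun k hk => ?_)
    rw [abs_mul, abs_of_nonneg (hw h₁ h₂ k)]
    exact mul_le_mul_of_nonneg_right (hpt h₁ hh₁ h₂ hh₂ k hk) (hw h₁ h₂ k)
  refine step1.trans ?_
  -- split into four factorized sums
  have hsplit : ∑ h₁ ∈ Finset.range (l₁+1), ∑ h₂ ∈ Finset.range (l₂+1),
        ∑ k ∈ Finset.range m,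
          (L * (|u₁ - (h₁:ℝ)/l₁| + |u₂ - (h₂:ℝ)/l₂|
            + (1/(m:ℝ) + |(k:ℝ)/((m:ℝ)-1) - v|)))
            * (bern l₁ h₁ u₁ * bern l₂ h₂ u₂ * bern (m-1) k v)
      = (∑ h₁ ∈ Finset.range (l₁+1), L * |u₁ - (h₁:ℝ)/l₁| * bern l₁ h₁ u₁)
          * (∑ h₂ ∈ Finset.range (l₂+1), bern l₂ h₂ u₂) * (∑ k ∈ Finset.range m, bern (m-1) k v)
        + (∑ h₁ ∈ Finset.range (l₁+1), bern l₁ h₁ u₁)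
          * (∑ h₂ ∈ Finset.range (l₂+1), L * |u₂ - (h₂:ℝ)/l₂| * bern l₂ h₂ u₂)
          * (∑ k ∈ Finset.range m, bern (m-1) k v)
        + (∑ h₁ ∈ Finset.range (l₁+1), L * (1/(m:ℝ)) * bern l₁ h₁ u₁)
          * (∑ h₂ ∈ Finset.range (l₂+1), bern l₂ h₂ u₂) * (∑ k ∈ Finset.range m, bern (m-1) k v)
        + (∑ h₁ ∈ Finset.range (l₁+1), bern l₁ h₁ u₁)
          * (∑ h₂ ∈ Finset.range (l₂+1), bern l₂ h₂ u₂)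
          * (∑ k ∈ Finset.range m, L * |(k:ℝ)/((m:ℝ)-1) - v| * bern (m-1) k v) := by
    rw [← sum3_factor, ← sum3_factor, ← sum3_factor, ← sum3_factor,
      ← Finset.sum_add_distrib, ← Finset.sum_add_distrib, ← Finset.sum_add_distrib]
    refine Finset.sum_congr rfl fun h₁ _ => ?_
    rw [← Finset.sum_add_distrib, ← Finset.sum_add_distrib, ← Finset.sum_add_distrib]
    refine Finset.sum_congr rfl fun h₂ _ => ?_
    rw [← Finset.sum_add_distrib, ← Finset.sum_add_distrib, ← Finset.sum_add_distrib]
    refine Finset.sum_congr rfl fun k _ => ?_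
    ring
  rw [hsplit, hb1, hb2, hb3]
  -- bound the four factors
  have hS1 : ∑ h₁ ∈ Finset.range (l₁+1), L * |u₁ - (h₁:ℝ)/l₁| * bern l₁ h₁ u₁
      ≤ L * (1 / (2 * Real.sqrt l₁)) := by
    have he : ∑ h₁ ∈ Finset.range (l₁+1), L * |u₁ - (h₁:ℝ)/l₁| * bern l₁ h₁ u₁
        = L * ∑ h₁ ∈ Finset.range (l₁+1), |(h₁:ℝ)/l₁ - u₁| * bern l₁ h₁ u₁ := by
      rw [Finset.mul_sum]
      exact Finset.sum_congr rfl fun h₁ _ => by rw [abs_sub_comm]; ring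
    rw [he]
    exact mul_le_mul_of_nonneg_left (bern_absdev l₁ hl₁ hu₁0 hu₁1) hL0
  have hS2 : ∑ h₂ ∈ Finset.range (l₂+1), L * |u₂ - (h₂:ℝ)/l₂| * bern l₂ h₂ u₂
      ≤ L * (1 / (2 * Real.sqrt l₂)) := by
    have he : ∑ h₂ ∈ Finset.range (l₂+1), L * |u₂ - (h₂:ℝ)/l₂| * bern l₂ h₂ u₂
        = L * ∑ h₂ ∈ Finset.range (l₂+1), |(h₂:ℝ)/l₂ - u₂| * bern l₂ h₂ u₂ := by
      rw [Finset.mul_sum]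
      exact Finset.sum_congr rfl fun h₂ _ => by rw [abs_sub_comm]; ring
    rw [he]
    exact mul_le_mul_of_nonneg_left (bern_absdev l₂ hl₂ hu₂0 hu₂1) hL0
  have hS3 : ∑ h₁ ∈ Finset.range (l₁+1), L * (1/(m:ℝ)) * bern l₁ h₁ u₁
      = L * (1/(m:ℝ)) := by
    rw [← Finset.mul_sum, hb1, mul_one]
  have hcast : ((m - 1 : ℕ) : ℝ) = (m:ℝ) - 1 := by
    rw [Nat.cast_sub (by omega)]; norm_num
  have hS4 : ∑ k ∈ Finset.range m, L * |(k:ℝ)/((m:ℝ)-1) - v| * bern (m-1) k v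
      ≤ L * (1 / (2 * Real.sqrt ((m:ℝ)-1))) := by
    have habs := bern_absdev (m-1) (by omega) hv0 hv1
    rw [Nat.sub_add_cancel (by omega), hcast] at habs
    have he : ∑ k ∈ Finset.range m, L * |(k:ℝ)/((m:ℝ)-1) - v| * bern (m-1) k v
        = L * ∑ k ∈ Finset.range m, |(k:ℝ)/((m:ℝ)-1) - v| * bern (m-1) k v := by
      rw [Finset.mul_sum]
      exact Finset.sum_congr rfl fun k _ => by ring
    rw [he]
    exact mul_le_mul_of_nonneg_left habs hL0
  refine le_trans (le_of_eq (by ring)) (le_trans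
    (add_le_add (add_le_add (add_le_add hS1 hS2) (le_of_eq hS3)) hS4) (le_of_eq (by ring)))
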